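/- Fix n ≥ 3. Let (p_k) be a sequence of reals with p_k ≥ 2 and p_k → ∞, and (a_k) reals with |a_k| ≤ 2√(p_k). Suppose a_{n,k} satisfies |a_{n,k} - ((5-n) + (n-1)a_k - (n-1)p_k)| ≤ C/√(p_k) for a constant C, and |a_{n,k}| ≤ 2√(p_k^n). Define θ_k := arccos(a_{n,k}/(2√(p_k^n))) and Δ_k := (√(p_k^{n-1})/(n-1))·(π/2 - θ_k) + (1/2)(√(p_k) + (n-5)/((n-1)√(p_k))). Then Δ_k - a_k/(2√(p_k)) → 0 as k → ∞. -/

import Mathlib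

open Filter Real

lemma arcsin_sub_bound_nonneg {x : ℝ} (h0 : 0 ≤ x) (h12 : x ≤ 1/2) :
    0 ≤ Real.arcsin x - x ∧ Real.arcsin x - x ≤ 2*x^3 := by
  rcases eq_or_lt_of_le h0 with rfl | hx0
  · simp
  have hx1 : x ≤ 1 := by linarith
  have hy0 : 0 < Real.arcsin x := Real.arcsin_pos.2 hx0
  have hsin : Real.sin (Real.arcsin x) = x := Real.sin_arcsin (by linarith) hx1
  have hsin1 : (1:ℝ) - 1^3/4 < Real.sin 1 := by have := Real.sin_gt_sub_cube (x := 1) one_pos; linarith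
  have hpi : (1:ℝ) ≤ π/2 := by
    have := Real.pi_gt_three
    linarith
  have hy1 : Real.arcsin x ≤ 1 := by
    have h1 : x ≤ Real.sin 1 := by norm_num at hsin1; linarith
    calc Real.arcsin x ≤ Real.arcsin (Real.sin 1) := Real.monotone_arcsin h1
      _ = 1 := Real.arcsin_sin (by linarith) hpi
  set y := Real.arcsin x with hy
  have hle : x ≤ y := by
    have := Real.sin_lt hy0
    linarith [hsin]
  have hcube : y - y^3/4 < x := by
    have := Real.sin_gt_sub_cube hy0
    linarith [hsin, pow_pos hy0 3]
  have hy3 : y^3 ≤ y := by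
    nlinarith [mul_nonneg (mul_nonneg hy0.le (sub_nonneg.2 hy1)) (by linarith : (0:ℝ) ≤ 1 + y)]
  have hy43 : y ≤ 4/3 * x := by linarith
  have hpow : y^3 ≤ (4/3*x)^3 := pow_le_pow_left₀ hy0.le hy43 3
  have hx3 : 0 ≤ x^3 := by positivity
  constructor
  · linarith
  · nlinarith [hpow]

lemma arcsin_approx {x : ℝ} (hx : |x| ≤ 1/2) : |Real.arcsin x - x| ≤ 2*|x|^3 := by
  rcases le_or_gt 0 x with h | h
  · have hb := arcsin_sub_bound_nonneg h (by rwa [abs_of_nonneg h] at hx)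
    rw [abs_of_nonneg hb.1, abs_of_nonneg h]
    exact hb.2
  · have h0 : (0:ℝ) ≤ -x := by linarith
    have hb := arcsin_sub_bound_nonneg h0 (by rwa [abs_of_neg h] at hx)
    rw [Real.arcsin_neg] at hb
    rw [abs_of_neg h, abs_of_nonpos (by linarith [hb.1] : Real.arcsin x - x ≤ 0)]
    nlinarith [hb.2]

set_option maxHeartbeats 1000000 in
lemma big_Delta_perk (n : ℕ) (hn : 3 ≤ n) (C : ℝ) (hC : 0 ≤ C)
    (q aa A θk Δk : ℝ)
    (hq2 : 2 ≤ q)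
    (hk : (4*(n:ℝ)+C+2)^2 ≤ q)
    (ha : |aa| ≤ 2*Real.sqrt q)
    (hA : |A - ((5-(n:ℝ)) + ((n:ℝ)-1)*aa - ((n:ℝ)-1)*q)| ≤ C / Real.sqrt q)
    (hθk : θk = Real.arccos (A / (2*Real.sqrt (q^n))))
    (hΔk : Δk = Real.sqrt (q^(n-1))/((n:ℝ)-1)*(π/2 - θk)
      + (1/2)*(Real.sqrt q + ((n:ℝ)-5)/(((n:ℝ)-1)*Real.sqrt q))) :
    |Δk - aa/(2*Real.sqrt q)| ≤ ((4*(n:ℝ)+C+2)^3 + C)/Real.sqrt q := by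
  have hn3 : (3:ℝ) ≤ (n:ℝ) := by exact_mod_cast hn
  set D : ℝ := 4*(n:ℝ) + C + 2 with hDdef
  have hD14 : 14 ≤ D := by simp only [hDdef]; linarith
  have hq0 : 0 < q := by linarith
  have hq1 : 1 ≤ q := by linarith
  set s := Real.sqrt q with hsdef
  have hs0 : 0 < s := Real.sqrt_pos.2 hq0
  have hss : s * s = q := Real.mul_self_sqrt hq0.le
  have hs1 : 1 ≤ s := by nlinarith
  have hsq : s ≤ q := by nlinarith
  have hDs : D ≤ s := by nlinarith
  set sm := Real.sqrt (q^(n-1)) with hsmdef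
  set sn := Real.sqrt (q^n) with hsndef
  have hnsub : n - 1 + 1 = n := by omega
  have hqnm : q^n = q^(n-1) * q := by rw [← pow_succ, hnsub]
  have hsm0 : 0 < sm := Real.sqrt_pos.2 (by positivity)
  have hsn0 : 0 < sn := Real.sqrt_pos.2 (by positivity)
  have hsm2 : sm * sm = q^(n-1) := Real.mul_self_sqrt (by positivity)
  have hsn_eq : sn = sm * s := by
    rw [hsndef, hqnm, Real.sqrt_mul (by positivity)]
  have hn1 : (2:ℝ) ≤ (n:ℝ) - 1 := by linarith
  have hq3n : q^3 ≤ q^n := pow_le_pow_right₀ hq1 hn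
  have hq2nm : q^2 ≤ q^(n-1) := pow_le_pow_right₀ hq1 (by omega)
  set x := A / (2 * sn) with hxdef
  have hAnM := abs_le.1 hA
  have haM := abs_le.1 ha
  have hCs : C / s ≤ C := div_le_self hC hs1
  have hCs0 : 0 ≤ C / s := div_nonneg hC hs0.le
  have hAnbd : |A| ≤ D * q := by
    have h1 : ((n:ℝ)-1) * aa ≤ ((n:ℝ)-1) * (2*s) :=
      mul_le_mul_of_nonneg_left haM.2 (by linarith)
    have h1' : ((n:ℝ)-1) * (-(2*s)) ≤ ((n:ℝ)-1) * aa :=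
      mul_le_mul_of_nonneg_left (neg_le.1 (neg_le.2 haM.1)) (by linarith)
    have h2 : ((n:ℝ)-1) * s ≤ ((n:ℝ)-1) * q :=
      mul_le_mul_of_nonneg_left hsq (by linarith)
    have h3 : (0:ℝ) ≤ ((n:ℝ)-1) * q := mul_nonneg (by linarith) hq0.le
    have h5 : (2*(n:ℝ)+4+C) * 1 ≤ (2*(n:ℝ)+4+C) * q :=
      mul_le_mul_of_nonneg_left hq1 (by linarith)
    have h6 : ((n:ℝ)+5+C) * 1 ≤ ((n:ℝ)+5+C) * q :=
      mul_le_mul_of_nonneg_left hq1 (by linarith)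
    rw [hDdef, abs_le]
    constructor
    · linarith [hAnM.1, hCs]
    · linarith [hAnM.2, hCs]
  have hsn_lb : q * s ≤ sn := by
    have h1 : Real.sqrt (q^3) ≤ sn := Real.sqrt_le_sqrt hq3n
    have h2 : Real.sqrt (q^3) = q * s := by
      rw [show q^3 = q^2 * q by ring, Real.sqrt_mul (by positivity), Real.sqrt_sq hq0.le]
    linarith
  have hxbd : |x| ≤ D / (2*s) := by
    rw [hxdef, abs_div, abs_of_pos (by positivity : (0:ℝ) < 2 * sn)]
    rw [div_le_div_iff₀ (by positivity) (by positivity)]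
    calc |A| * (2*s) ≤ (D*q) * (2*s) := by
          apply mul_le_mul_of_nonneg_right hAnbd (by positivity)
      _ = D * (2 * (q * s)) := by ring
      _ ≤ D * (2 * sn) := by
          apply mul_le_mul_of_nonneg_left _ (by linarith)
          linarith
  have hx12 : |x| ≤ 1/2 := by
    have h2 : D/(2*s) ≤ 1/2 := by
      rw [div_le_div_iff₀ (by positivity) two_pos]
      linarith
    exact hxbd.trans h2
  have harc := arcsin_approx hx12
  set M := (5 - (n:ℝ)) + ((n:ℝ)-1) * aa - ((n:ℝ)-1) * q with hMdef
  have hne : ((n:ℝ) - 1) ≠ 0 := by linarith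
  have hxbd' : |x| ≤ D*q/(2*sn) := by
    rw [hxdef, abs_div, abs_of_pos (by positivity : (0:ℝ) < 2 * sn)]
    gcongr
  have key : Δk - aa / (2*s) =
      (sm/((n:ℝ)-1)) * (Real.arcsin x - x) + (A - M)/(2*((n:ℝ)-1)*s) := by
    rw [hΔk, hθk, Real.arccos_eq_pi_div_two_sub_arcsin, sub_sub_cancel, hxdef, hsn_eq, hMdef,
      ← hss]
    field_simp
    ring
  rw [key]
  have habs : |(sm/((n:ℝ)-1)) * (Real.arcsin x - x) + (A - M)/(2*((n:ℝ)-1)*s)|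
      ≤ |(sm/((n:ℝ)-1)) * (Real.arcsin x - x)| + |(A - M)/(2*((n:ℝ)-1)*s)| := abs_add_le _ _
  have hR1 : |(sm/((n:ℝ)-1)) * (Real.arcsin x - x)| ≤ D^3/s := by
    rw [abs_mul, abs_of_pos (by positivity : (0:ℝ) < sm/((n:ℝ)-1))]
    have h1 : |Real.arcsin x - x| ≤ 2*(D*q/(2*sn))^3 := by
      refine harc.trans ?_
      have := pow_le_pow_left₀ (abs_nonneg x) hxbd' 3
      linarith
    have h2 : sm/((n:ℝ)-1) * (2*(D*q/(2*sn))^3) ≤ D^3/s := by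
      have e1 : sm/((n:ℝ)-1) * (2*(D*q/(2*sn))^3)
          = sm * D^3 * q^3 / (4*((n:ℝ)-1) * sn^3) := by
        field_simp
        ring
      have e2 : sn^3 = q^(n-1)*q*(sm*s) := by
        calc sn^3 = (sm*sm)*(s*s)*(sm*s) := by rw [hsn_eq]; ring
          _ = q^(n-1)*q*(sm*s) := by rw [hsm2, hss]
      have h9 : q^3 ≤ q^(n-1)*q := by rw [← hqnm]; exact hq3n
      rw [e1, e2, div_le_div_iff₀ (by positivity) hs0]
      have hD0 : (0:ℝ) ≤ D^3 := by positivity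
      have h10 : q^3*(sm*s) ≤ q^(n-1)*q*(sm*s) :=
        mul_le_mul_of_nonneg_right h9 (by positivity)
      have hX : (0:ℝ) ≤ q^(n-1)*q*(sm*s) := by positivity
      calc sm * D^3 * q^3 * s = D^3 * (q^3*(sm*s)) := by ring
        _ ≤ D^3 * (q^(n-1)*q*(sm*s)) := mul_le_mul_of_nonneg_left h10 hD0
        _ ≤ D^3 * (4*((n:ℝ)-1) * (q^(n-1)*q*(sm*s))) :=
            mul_le_mul_of_nonneg_left
              (le_mul_of_one_le_left hX (by linarith)) hD0
    calc sm/((n:ℝ)-1) * |Real.arcsin x - x| ≤ sm/((n:ℝ)-1) * (2*(D*q/(2*sn))^3) := by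
          apply mul_le_mul_of_nonneg_left h1 (by positivity)
      _ ≤ D^3/s := h2
  have hR2 : |(A - M)/(2*((n:ℝ)-1)*s)| ≤ C/s := by
    have hnum : |A - M| ≤ C/s := by rw [hMdef]; exact hA
    rw [abs_div, abs_of_pos (by positivity : (0:ℝ) < 2*((n:ℝ)-1)*s)]
    calc |A - M|/(2*((n:ℝ)-1)*s) ≤ (C/s)/(2*((n:ℝ)-1)*s) := by gcongr
      _ ≤ C/s := div_le_self hCs0 (by nlinarith)
  calc |(sm/((n:ℝ)-1)) * (Real.arcsin x - x) + (A - M)/(2*((n:ℝ)-1)*s)|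
      ≤ D^3/s + C/s := le_trans habs (add_le_add hR1 hR2)
    _ = (D^3+C)/s := by rw [← add_div]

theorem big_Delta_structure
    (n : ℕ) (hn : 3 ≤ n)
    (p a An : ℕ → ℝ)
    (hp2 : ∀ k, 2 ≤ p k) (hptop : Tendsto p atTop atTop)
    (hHasse : ∀ k, |a k| ≤ 2 * Real.sqrt (p k))
    (C : ℝ)
    (hAn : ∀ k, |An k - ((5 - (n : ℝ)) + ((n : ℝ) - 1) * a k - ((n : ℝ) - 1) * p k)| ≤
      C / Real.sqrt (p k))
    (hRH : ∀ k, |An k| ≤ 2 * Real.sqrt (p k ^ n))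
    (θ Δ : ℕ → ℝ)
    (hθ : ∀ k, θ k = Real.arccos (An k / (2 * Real.sqrt (p k ^ n))))
    (hΔ : ∀ k, Δ k = (Real.sqrt (p k ^ (n - 1)) / ((n : ℝ) - 1)) * (π / 2 - θ k)
      + (1 / 2) * (Real.sqrt (p k) + ((n : ℝ) - 5) / (((n : ℝ) - 1) * Real.sqrt (p k)))) :
    Tendsto (fun k => Δ k - a k / (2 * Real.sqrt (p k))) atTop (nhds 0) := by
  have hn3 : (3:ℝ) ≤ (n:ℝ) := by exact_mod_cast hn
  have hC : 0 ≤ C := by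
    have h := hAn 0
    have hs0 : 0 < Real.sqrt (p 0) := Real.sqrt_pos.2 (by linarith [hp2 0])
    have h2 : 0 ≤ C / Real.sqrt (p 0) := le_trans (abs_nonneg _) h
    by_contra hneg
    push_neg at hneg
    have : C / Real.sqrt (p 0) < 0 := div_neg_of_neg_of_pos hneg hs0
    linarith
  have hsqrtTop : Tendsto (fun k => Real.sqrt (p k)) atTop atTop := by
    rw [tendsto_atTop]
    intro b
    filter_upwards [hptop.eventually_ge_atTop (b^2 ⊔ 1)] with k hk
    have h1 : b^2 ≤ p k := le_trans (le_max_left _ _) hk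
    rcases le_or_gt b 0 with hb | hb
    · exact hb.trans (Real.sqrt_nonneg _)
    · calc b = Real.sqrt (b^2) := (Real.sqrt_sq hb.le).symm
        _ ≤ _ := Real.sqrt_le_sqrt h1
  have hlim : Tendsto (fun k => ((4*(n:ℝ)+C+2)^3 + C)/Real.sqrt (p k)) atTop (nhds 0) :=
    tendsto_const_nhds.div_atTop hsqrtTop
  apply squeeze_zero_norm' _ hlim
  filter_upwards [hptop.eventually_ge_atTop ((4*(n:ℝ)+C+2)^2)] with k hk
  rw [Real.norm_eq_abs]
  exact big_Delta_perk n hn C hC (p k) (a k) (An k) (θ k) (Δ k)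
    (hp2 k) hk (hHasse k) (hAn k) (hθ k) (hΔ k)
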